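/- For every n ∈ ℕ with n > 1, neither the all-ones vector 1_{n+1} ∈ ℝ^{n+1} nor the vector λ̃ = ((n+1)/n)·(1/2, 1, …, 1, 1/2) ∈ ℝ^{n+1} is a minimizer of σ(B(·)) over Λ_n; that is, there exists λ ∈ Λ_n with σ(B(λ)) < σ(B(1_{n+1})), and there exists λ' ∈ Λ_n with σ(B(λ')) < σ(B(λ̃)). -/

import Mathlib

open Real

/-- The `(n+2) × (n+2)` symmetric tridiagonal matrix `B(λ)` with zero diagonal and
entries `λ_{j}^{-1/2}` on the sub/super-diagonals (0-based indexing: the entry in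
positions `(i, i+1)` and `(i+1, i)` is `(l i)^{-1/2}` for `i = 0, …, n`). -/
noncomputable def Bmat (n : ℕ) (l : Fin (n+1) → ℝ) :
    Matrix (Fin (n+2)) (Fin (n+2)) ℝ :=
  Matrix.of fun i j =>
    if h1 : (i : ℕ) + 1 = (j : ℕ) then
      l ⟨(i : ℕ), by have := j.isLt; omega⟩ ^ (-(1/2) : ℝ)
    else if h2 : (j : ℕ) + 1 = (i : ℕ) then
      l ⟨(j : ℕ), by have := i.isLt; omega⟩ ^ (-(1/2) : ℝ)
    else 0

/-- The largest eigenvalue (Perron root) of `B(λ)`. -/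
noncomputable def sigmaB (n : ℕ) (l : Fin (n+1) → ℝ) : ℝ :=
  sSup {μ : ℝ | ∃ v : Fin (n+2) → ℝ, v ≠ 0 ∧ (Bmat n l).mulVec v = μ • v}

/-- The feasible set `Λ_n`: all entries positive and `(1/(n+1)) ∑ λ_i ≤ 1`. -/
def Feasible (n : ℕ) (l : Fin (n+1) → ℝ) : Prop :=
  (∀ i, 0 < l i) ∧ (∑ i, l i) / ((n : ℝ) + 1) ≤ 1

/-- `λ̄` is a minimizer of `σ(B(·))` over `Λ_n`. -/
def IsMinimizer (n : ℕ) (l : Fin (n+1) → ℝ) : Prop :=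
  Feasible n l ∧ ∀ m : Fin (n+1) → ℝ, Feasible n m → sigmaB n l ≤ sigmaB n m

/-- A Perron vector of `B(λ)`: positive entries, Euclidean norm one,
eigenvector for the Perron root. -/
def IsPerronVector (n : ℕ) (l : Fin (n+1) → ℝ) (v : Fin (n+2) → ℝ) : Prop :=
  (∀ i, 0 < v i) ∧ (∑ i, v i ^ 2) = 1 ∧ (Bmat n l).mulVec v = sigmaB n l • v

lemma rpow_neg_half_eq {x y : ℝ} (hx : 0 < x) (hy : 0 < y) (h : x * y ^ 2 = 1) :
    x ^ (-(1/2) : ℝ) = y := by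
  have hxy : x⁻¹ = y ^ 2 := by
    field_simp
    linear_combination -h
  have h1 : x ^ (-(1/2) : ℝ) = (x ^ ((1:ℝ)/2))⁻¹ := by
    rw [← Real.rpow_neg hx.le]
  rw [h1, ← Real.sqrt_eq_rpow, ← Real.sqrt_inv, hxy, Real.sqrt_sq hy.le]

lemma Bmat_nonneg {n : ℕ} {l : Fin (n+1) → ℝ} (hl : ∀ i, 0 < l i) (i j : Fin (n+2)) :
    0 ≤ Bmat n l i j := by
  unfold Bmat
  simp only [Matrix.of_apply]
  split_ifs
  · exact (Real.rpow_nonneg (hl _).le _)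
  · exact (Real.rpow_nonneg (hl _).le _)
  · exact le_refl 0

lemma Bmat_symm (n : ℕ) (l : Fin (n+1) → ℝ) (i j : Fin (n+2)) :
    Bmat n l i j = Bmat n l j i := by
  unfold Bmat
  simp only [Matrix.of_apply]
  by_cases h1 : (i : ℕ) + 1 = (j : ℕ)
  · have h2 : ¬ ((j : ℕ) + 1 = (i : ℕ)) := by omega
    rw [dif_pos h1, dif_neg h2, dif_pos h1]
  · by_cases h2 : (j : ℕ) + 1 = (i : ℕ)
    · rw [dif_neg h1, dif_pos h2, dif_pos h2]
    · rw [dif_neg h1, dif_neg h2, dif_neg (fun h => h2 h), dif_neg (fun h => h1 h)]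

lemma Bmat_mulVec_apply (n : ℕ) (l : Fin (n+1) → ℝ) (v : Fin (n+2) → ℝ) (i : Fin (n+2)) :
    (Bmat n l).mulVec v i =
      (if _h : 0 < (i:ℕ) then
        l ⟨(i:ℕ)-1, by have := i.isLt; omega⟩ ^ (-(1/2) : ℝ) * v ⟨(i:ℕ)-1, by have := i.isLt; omega⟩
      else 0) +
      (if h : (i:ℕ) < n+1 then
        l ⟨(i:ℕ), h⟩ ^ (-(1/2) : ℝ) * v ⟨(i:ℕ)+1, by omega⟩
      else 0) := by
  have hI := i.isLt
  set W : ℕ → ℝ := fun k => if h : k < n+1 then l ⟨k, h⟩ ^ (-(1/2) : ℝ) else 0 with hW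
  have hmv : (Bmat n l).mulVec v i = ∑ j : Fin (n+2), Bmat n l i j * v j := rfl
  rw [hmv]
  have split : ∀ j : Fin (n+2), Bmat n l i j * v j =
      (if (i:ℕ)+1 = (j:ℕ) then W (i:ℕ) * v j else 0) +
      (if (j:ℕ)+1 = (i:ℕ) then W ((i:ℕ)-1) * v j else 0) := by
    intro j
    have hJ := j.isLt
    unfold Bmat
    simp only [Matrix.of_apply]
    by_cases h1 : (i:ℕ)+1 = (j:ℕ)
    · have hi : (i:ℕ) < n+1 := by omega
      have h2 : ¬ ((j:ℕ)+1 = (i:ℕ)) := by omega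
      rw [dif_pos h1, if_pos h1, if_neg h2, add_zero]
      simp only [hW, dif_pos hi]
    · by_cases h2 : (j:ℕ)+1 = (i:ℕ)
      · have hi : (j:ℕ) < n+1 := by omega
        rw [dif_neg h1, dif_pos h2, if_neg h1, if_pos h2, zero_add]
        simp only [hW, dif_pos (show (i:ℕ)-1 < n+1 by omega)]
        congr 2
        have hji : (j:ℕ) = (i:ℕ)-1 := by omega
        exact congrArg l (Fin.mk_eq_mk.mpr hji)
      · rw [dif_neg h1, dif_neg h2, if_neg h1, if_neg h2, add_zero, zero_mul]
  rw [Finset.sum_congr rfl (fun j _ => split j), Finset.sum_add_distrib]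
  have S1 : (∑ j : Fin (n+2), if (i:ℕ)+1 = (j:ℕ) then W (i:ℕ) * v j else 0)
      = (if h : (i:ℕ) < n+1 then
        l ⟨(i:ℕ), h⟩ ^ (-(1/2) : ℝ) * v ⟨(i:ℕ)+1, by omega⟩ else 0) := by
    by_cases hi : (i:ℕ) < n+1
    · rw [dif_pos hi, Finset.sum_eq_single (⟨(i:ℕ)+1, by omega⟩ : Fin (n+2))]
      · rw [if_pos rfl]
        simp only [hW, dif_pos hi]
      · intro j _ hj
        refine if_neg (fun ha => hj (Fin.ext ?_))
        simp only []
        omega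
      · intro h
        exact absurd (Finset.mem_univ _) h
    · rw [dif_neg hi, Finset.sum_eq_zero]
      intro j _
      have hJ := j.isLt
      exact if_neg (by omega)
  have S2 : (∑ j : Fin (n+2), if (j:ℕ)+1 = (i:ℕ) then W ((i:ℕ)-1) * v j else 0)
      = (if _h : 0 < (i:ℕ) then
        l ⟨(i:ℕ)-1, by have := i.isLt; omega⟩ ^ (-(1/2) : ℝ) *
          v ⟨(i:ℕ)-1, by have := i.isLt; omega⟩ else 0) := by
    by_cases hi : 0 < (i:ℕ)
    · rw [dif_pos hi, Finset.sum_eq_single (⟨(i:ℕ)-1, by omega⟩ : Fin (n+2))]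
      · rw [if_pos (show ((⟨(i:ℕ)-1, by omega⟩ : Fin (n+2)) : ℕ)+1 = (i:ℕ) by
          simp only []
          omega)]
        simp only [hW, dif_pos (show (i:ℕ)-1 < n+1 by omega)]
      · intro j _ hj
        refine if_neg (fun ha => hj (Fin.ext ?_))
        simp only []
        omega
      · intro h
        exact absurd (Finset.mem_univ _) h
    · rw [dif_neg hi, Finset.sum_eq_zero]
      intro j _
      exact if_neg (by omega)
  rw [S1, S2, add_comm]

lemma sigmaB_eq_of_eig (n : ℕ) (l : Fin (n+1) → ℝ) (hl : ∀ i, 0 < l i)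
    (u : Fin (n+2) → ℝ) (hu : ∀ i, 0 < u i) (μ : ℝ) (hμ : 0 ≤ μ)
    (heig : (Bmat n l).mulVec u = μ • u) : sigmaB n l = μ := by
  have key : ∀ ν ∈ {μ' : ℝ | ∃ v : Fin (n+2) → ℝ, v ≠ 0 ∧ (Bmat n l).mulVec v = μ' • v},
      ν ≤ μ := by
    rintro ν ⟨x, hx, he⟩
    set S := ∑ i, u i * |x i| with hS
    have hSpos : 0 < S := by
      obtain ⟨k, hk⟩ := Function.ne_iff.mp hx
      refine Finset.sum_pos' (fun i _ => mul_nonneg (hu i).le (abs_nonneg _))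
        ⟨k, Finset.mem_univ _, mul_pos (hu k) (abs_pos.mpr hk)⟩
    have hmvx : ∀ i, (Bmat n l).mulVec x i = ∑ j, Bmat n l i j * x j := fun _ => rfl
    have hmvu : ∀ j, (Bmat n l).mulVec u j = ∑ i, Bmat n l j i * u i := fun _ => rfl
    have step1 : |ν| * S ≤ μ * S := by
      have h1 : |ν| * S = ∑ i, u i * |(Bmat n l).mulVec x i| := by
        rw [hS, Finset.mul_sum]
        refine Finset.sum_congr rfl fun i _ => ?_
        rw [he]
        simp only [Pi.smul_apply, smul_eq_mul, abs_mul]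
        ring
      have h2 : ∀ i, |(Bmat n l).mulVec x i| ≤ ∑ j, Bmat n l i j * |x j| := by
        intro i
        rw [hmvx i]
        calc |∑ j, Bmat n l i j * x j| ≤ ∑ j, |Bmat n l i j * x j| :=
              Finset.abs_sum_le_sum_abs _ _
          _ = ∑ j, Bmat n l i j * |x j| := Finset.sum_congr rfl fun j _ => by
              rw [abs_mul, abs_of_nonneg (Bmat_nonneg hl i j)]
      have h3 : ∑ i, u i * |(Bmat n l).mulVec x i| ≤ ∑ i, ∑ j, u i * (Bmat n l i j * |x j|) := by
        refine Finset.sum_le_sum fun i _ => ?_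
        rw [← Finset.mul_sum]
        exact mul_le_mul_of_nonneg_left (h2 i) (hu i).le
      have h4 : ∑ i, ∑ j, u i * (Bmat n l i j * |x j|) = ∑ j, ((Bmat n l).mulVec u j) * |x j| := by
        rw [Finset.sum_comm]
        refine Finset.sum_congr rfl fun j _ => ?_
        rw [hmvu j, Finset.sum_mul]
        refine Finset.sum_congr rfl fun i _ => ?_
        rw [Bmat_symm n l j i]
        ring
      have h5 : ∑ j, ((Bmat n l).mulVec u j) * |x j| = μ * S := by
        rw [heig, hS, Finset.mul_sum]
        refine Finset.sum_congr rfl fun j _ => ?_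
        simp only [Pi.smul_apply, smul_eq_mul]
        ring
      linarith [h1, h3, h4, h5]
    calc ν ≤ |ν| := le_abs_self ν
      _ ≤ μ := le_of_mul_le_mul_right (by linarith) hSpos
  unfold sigmaB
  apply le_antisymm
  · exact Real.sSup_le key hμ
  · refine le_csSup ⟨μ, key⟩ ⟨u, ?_, heig⟩
    intro h0
    exact absurd (congrFun h0 0) (ne_of_gt (hu 0))

lemma sin_two_term (θ x : ℝ) : Real.sin (x - θ) + Real.sin (x + θ) = 2 * Real.cos θ * Real.sin x := by
  rw [Real.sin_add, Real.sin_sub]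
  ring

lemma sigma_ones (n : ℕ) :
    sigmaB n (fun _ => 1) = 2 * Real.cos (π / ((n:ℝ)+3)) := by
  have hn3 : (0:ℝ) < (n:ℝ)+3 := by positivity
  set θ := π / ((n:ℝ)+3) with hθ
  have hθpos : 0 < θ := div_pos Real.pi_pos hn3
  have hπeq : ((n:ℝ)+3) * θ = π := mul_div_cancel₀ π (ne_of_gt hn3)
  have hθhalf : θ < π/2 := by
    rw [hθ, div_lt_div_iff₀ hn3 two_pos]
    nlinarith [Real.pi_pos]
  have hcos : 0 < Real.cos θ := Real.cos_pos_of_mem_Ioo ⟨by linarith, hθhalf⟩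
  refine sigmaB_eq_of_eig n _ (fun _ => one_pos)
    (fun j => Real.sin ((((j:ℕ):ℝ)+1) * θ)) ?_ _ (by positivity) ?_
  · intro j
    have hj : ((j:ℕ):ℝ) + 1 < (n:ℝ) + 3 := by
      have := j.isLt
      have : ((j:ℕ):ℝ) < (n:ℝ) + 2 := by exact_mod_cast this
      linarith
    have h1 : (0:ℝ) < (((j:ℕ):ℝ)+1) * θ := by positivity
    have h2 : (((j:ℕ):ℝ)+1) * θ < π := by
      rw [← hπeq]
      exact mul_lt_mul_of_pos_right hj hθpos
    exact Real.sin_pos_of_pos_of_lt_pi h1 h2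
  · funext i
    rw [Bmat_mulVec_apply]
    have hI := i.isLt
    simp only [Real.one_rpow, one_mul, Pi.smul_apply, smul_eq_mul, Fin.val_mk]
    set k := (i:ℕ) with hk
    by_cases hk0 : 0 < k
    · by_cases hktop : k < n+1
      · rw [dif_pos hk0, dif_pos hktop]
        have e1 : ((↑(k-1):ℝ)+1) * θ = ((k:ℝ)+1) * θ - θ := by
          have : ((k-1:ℕ):ℝ) = (k:ℝ) - 1 := by
            rw [Nat.cast_sub hk0]
            norm_num
          rw [this]; ring
        have e2 : ((↑(k+1):ℝ)+1) * θ = ((k:ℝ)+1) * θ + θ := by push_cast; ring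
        rw [e1, e2, sin_two_term]
      · have hkeq : k = n+1 := by omega
        rw [dif_pos hk0, dif_neg hktop, add_zero]
        have e1 : ((↑(k-1):ℝ)+1) * θ = ((k:ℝ)+1) * θ - θ := by
          have : ((k-1:ℕ):ℝ) = (k:ℝ) - 1 := by
            rw [Nat.cast_sub hk0]
            norm_num
          rw [this]; ring
        have hzero : Real.sin (((k:ℝ)+1) * θ + θ) = 0 := by
          have : ((k:ℝ)+1) * θ + θ = π := by
            rw [← hπeq, hkeq]
            push_cast
            ring
          rw [this, Real.sin_pi]
        have := sin_two_term θ (((k:ℝ)+1) * θ)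
        rw [e1]
        linarith [this, hzero]
    · have hkeq : k = 0 := by omega
      rw [dif_neg hk0, dif_pos (show k < n+1 by omega), zero_add]
      have e2 : ((↑(k+1):ℝ)+1) * θ = ((k:ℝ)+1) * θ + θ := by push_cast; ring
      have e0 : ((k:ℝ)+1) * θ - θ = (k:ℝ) * θ := by ring
      have := sin_two_term θ (((k:ℝ)+1) * θ)
      rw [e2]
      have hzero : Real.sin (((k:ℝ)+1) * θ - θ) = 0 := by
        rw [e0, hkeq]
        norm_num
      linarith [this, hzero]

lemma sigma_tilde (n : ℕ) (hn : 1 < n) :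
    sigmaB n (fun i => if (i : ℕ) = 0 ∨ (i : ℕ) = n
        then ((n : ℝ) + 1) / (2 * n) else ((n : ℝ) + 1) / n)
      = 2 * Real.sqrt ((n:ℝ)/((n:ℝ)+1)) := by
  have hnR : (2:ℝ) ≤ (n:ℝ) := by exact_mod_cast hn
  have hnpos : (0:ℝ) < n := by linarith
  set T := (n:ℝ)/((n:ℝ)+1) with hT
  have hTpos : 0 < T := by positivity
  have hsT : Real.sqrt T * Real.sqrt T = T := Real.mul_self_sqrt hTpos.le
  have hs2 : Real.sqrt 2 * Real.sqrt 2 = 2 := Real.mul_self_sqrt (by norm_num)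
  have hsTpos : 0 < Real.sqrt T := Real.sqrt_pos.mpr hTpos
  have hs2pos : 0 < Real.sqrt 2 := Real.sqrt_pos.mpr (by norm_num)
  have hwend : (((n : ℝ) + 1) / (2 * n)) ^ (-(1/2) : ℝ) = Real.sqrt 2 * Real.sqrt T := by
    refine rpow_neg_half_eq (by positivity) (by positivity) ?_
    have : (Real.sqrt 2 * Real.sqrt T)^2 = 2 * T := by
      rw [mul_pow]
      rw [sq, hs2, sq, hsT]
    rw [this, hT]
    field_simp
  have hwint : (((n : ℝ) + 1) / n) ^ (-(1/2) : ℝ) = Real.sqrt T := by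
    refine rpow_neg_half_eq (by positivity) (by positivity) ?_
    rw [sq, hsT, hT]
    field_simp
  refine sigmaB_eq_of_eig n _ ?_ (fun j => if (j:ℕ) = 0 ∨ (j:ℕ) = n+1 then Real.sqrt 2 / 2 else 1)
    ?_ _ (by positivity) ?_
  · intro i
    split_ifs <;> positivity
  · intro j
    split_ifs <;> positivity
  · funext i
    rw [Bmat_mulVec_apply]
    have hI := i.isLt
    simp only [Pi.smul_apply, smul_eq_mul, Fin.val_mk]
    set k := (i:ℕ) with hk
    rcases (show k = 0 ∨ k = 1 ∨ (2 ≤ k ∧ k ≤ n-1) ∨ k = n ∨ k = n+1 by omega) with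
      h | h | h | h | h
    · rw [dif_neg (by omega), dif_pos (show k < n+1 by omega), zero_add]
      rw [if_pos (show (k = 0 ∨ k = n) by omega), if_neg (show ¬(k+1 = 0 ∨ k+1 = n+1) by omega),
        if_pos (show (k = 0 ∨ k = n+1) by omega), hwend]
      ring
    · rw [dif_pos (by omega), dif_pos (show k < n+1 by omega)]
      rw [if_pos (show (k-1 = 0 ∨ k-1 = n) by omega), if_pos (show (k-1 = 0 ∨ k-1 = n+1) by omega),
        if_neg (show ¬(k = 0 ∨ k = n) by omega), if_neg (show ¬(k+1 = 0 ∨ k+1 = n+1) by omega),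
        if_neg (show ¬(k = 0 ∨ k = n+1) by omega), hwend, hwint]
      linear_combination (Real.sqrt T / 2) * hs2
    · rw [dif_pos (by omega), dif_pos (show k < n+1 by omega)]
      rw [if_neg (show ¬(k-1 = 0 ∨ k-1 = n) by omega), if_neg (show ¬(k-1 = 0 ∨ k-1 = n+1) by omega),
        if_neg (show ¬(k = 0 ∨ k = n) by omega), if_neg (show ¬(k+1 = 0 ∨ k+1 = n+1) by omega),
        if_neg (show ¬(k = 0 ∨ k = n+1) by omega), hwint]
      ring
    · rw [dif_pos (by omega), dif_pos (show k < n+1 by omega)]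
      rw [if_neg (show ¬(k-1 = 0 ∨ k-1 = n) by omega), if_neg (show ¬(k-1 = 0 ∨ k-1 = n+1) by omega),
        if_pos (show (k = 0 ∨ k = n) by omega), if_pos (show (k+1 = 0 ∨ k+1 = n+1) by omega),
        if_neg (show ¬(k = 0 ∨ k = n+1) by omega), hwend, hwint]
      linear_combination (Real.sqrt T / 2) * hs2
    · rw [dif_pos (by omega), dif_neg (show ¬(k < n+1) by omega), add_zero]
      rw [if_pos (show (k-1 = 0 ∨ k-1 = n) by omega), if_neg (show ¬(k-1 = 0 ∨ k-1 = n+1) by omega),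
        if_pos (show (k = 0 ∨ k = n+1) by omega), hwend]
      ring

noncomputable def lgood (n : ℕ) : Fin (n+1) → ℝ := fun i =>
  if (i : ℕ) = 0 ∨ (i : ℕ) = n then (9/16) / ((40*(n:ℝ) - 3)/(40*((n:ℝ)+1)))
  else if (i : ℕ) = 1 ∨ (i : ℕ) = n-1 then (9/10) / ((40*(n:ℝ) - 3)/(40*((n:ℝ)+1)))
  else 1 / ((40*(n:ℝ) - 3)/(40*((n:ℝ)+1)))

lemma sigma_lgood (n : ℕ) (hn : 3 ≤ n) :
    sigmaB n (lgood n) = 2 * Real.sqrt ((40*(n:ℝ) - 3)/(40*((n:ℝ)+1))) := by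
  have hnR : (3:ℝ) ≤ (n:ℝ) := by exact_mod_cast hn
  set R := (40*(n:ℝ) - 3)/(40*((n:ℝ)+1)) with hR
  have hRpos : 0 < R := by
    apply div_pos <;> linarith
  have hsR : Real.sqrt R * Real.sqrt R = R := Real.mul_self_sqrt hRpos.le
  have hs10 : Real.sqrt 10 * Real.sqrt 10 = 10 := Real.mul_self_sqrt (by norm_num)
  have hsRpos : 0 < Real.sqrt R := Real.sqrt_pos.mpr hRpos
  have hs10pos : 0 < Real.sqrt 10 := Real.sqrt_pos.mpr (by norm_num)
  have hwend : ((9/16) / R) ^ (-(1/2) : ℝ) = 4/3 * Real.sqrt R := by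
    refine rpow_neg_half_eq (by positivity) (by positivity) ?_
    rw [mul_pow, Real.sq_sqrt hRpos.le]
    field_simp
    ring
  have hwnear : ((9/10) / R) ^ (-(1/2) : ℝ) = Real.sqrt 10 / 3 * Real.sqrt R := by
    refine rpow_neg_half_eq (by positivity) (by positivity) ?_
    rw [mul_pow, div_pow, Real.sq_sqrt (by norm_num : (0:ℝ) ≤ 10), Real.sq_sqrt hRpos.le]
    field_simp
    ring
  have hwint : (1 / R) ^ (-(1/2) : ℝ) = Real.sqrt R := by
    refine rpow_neg_half_eq (by positivity) (by positivity) ?_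
    rw [Real.sq_sqrt hRpos.le]
    field_simp
  refine sigmaB_eq_of_eig n _ ?_
    (fun j => if (j:ℕ) = 0 ∨ (j:ℕ) = n+1 then Real.sqrt 10 / 5
      else if (j:ℕ) = 1 ∨ (j:ℕ) = n then 3 * Real.sqrt 10 / 10 else 1)
    ?_ _ (by positivity) ?_
  · intro i
    simp only [lgood]
    split_ifs <;> positivity
  · intro j
    split_ifs <;> positivity
  · funext i
    rw [Bmat_mulVec_apply]
    have hI := i.isLt
    unfold lgood
    simp only [Pi.smul_apply, smul_eq_mul, Fin.val_mk]
    set k := (i:ℕ) with hk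
    rcases (show k = 0 ∨ k = 1 ∨ (k = 2 ∧ n = 3) ∨ (k = 2 ∧ 4 ≤ n) ∨ (3 ≤ k ∧ k ≤ n-2)
        ∨ (k = n-1 ∧ 4 ≤ n) ∨ k = n ∨ k = n+1 by omega) with
      h | h | h | h | h | h | h | h
    · rw [dif_neg (by omega), dif_pos (show k < n+1 by omega), zero_add,
        if_pos (show (k = 0 ∨ k = n) by omega),
        if_neg (show ¬(k+1 = 0 ∨ k+1 = n+1) by omega),
        if_pos (show (k+1 = 1 ∨ k+1 = n) by omega),
        if_pos (show (k = 0 ∨ k = n+1) by omega), hwend]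
      ring
    · rw [dif_pos (by omega), dif_pos (show k < n+1 by omega),
        if_pos (show (k-1 = 0 ∨ k-1 = n) by omega),
        if_pos (show (k-1 = 0 ∨ k-1 = n+1) by omega),
        if_neg (show ¬(k = 0 ∨ k = n) by omega),
        if_pos (show (k = 1 ∨ k = n-1) by omega),
        if_neg (show ¬(k+1 = 0 ∨ k+1 = n+1) by omega),
        if_neg (show ¬(k+1 = 1 ∨ k+1 = n) by omega),
        if_neg (show ¬(k = 0 ∨ k = n+1) by omega),
        if_pos (show (k = 1 ∨ k = n) by omega), hwend, hwnear]
      ring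
    · rw [dif_pos (by omega), dif_pos (show k < n+1 by omega),
        if_neg (show ¬(k-1 = 0 ∨ k-1 = n) by omega),
        if_pos (show (k-1 = 1 ∨ k-1 = n-1) by omega),
        if_neg (show ¬(k-1 = 0 ∨ k-1 = n+1) by omega),
        if_pos (show (k-1 = 1 ∨ k-1 = n) by omega),
        if_neg (show ¬(k = 0 ∨ k = n) by omega),
        if_pos (show (k = 1 ∨ k = n-1) by omega),
        if_neg (show ¬(k+1 = 0 ∨ k+1 = n+1) by omega),
        if_pos (show (k+1 = 1 ∨ k+1 = n) by omega),
        if_neg (show ¬(k = 0 ∨ k = n+1) by omega),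
        if_neg (show ¬(k = 1 ∨ k = n) by omega), hwnear]
      linear_combination (Real.sqrt R / 5) * hs10
    · rw [dif_pos (by omega), dif_pos (show k < n+1 by omega),
        if_neg (show ¬(k-1 = 0 ∨ k-1 = n) by omega),
        if_pos (show (k-1 = 1 ∨ k-1 = n-1) by omega),
        if_neg (show ¬(k-1 = 0 ∨ k-1 = n+1) by omega),
        if_pos (show (k-1 = 1 ∨ k-1 = n) by omega),
        if_neg (show ¬(k = 0 ∨ k = n) by omega),
        if_neg (show ¬(k = 1 ∨ k = n-1) by omega),
        if_neg (show ¬(k+1 = 0 ∨ k+1 = n+1) by omega),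
        if_neg (show ¬(k+1 = 1 ∨ k+1 = n) by omega),
        if_neg (show ¬(k = 0 ∨ k = n+1) by omega),
        if_neg (show ¬(k = 1 ∨ k = n) by omega), hwnear, hwint]
      linear_combination (Real.sqrt R / 10) * hs10
    · rw [dif_pos (by omega), dif_pos (show k < n+1 by omega),
        if_neg (show ¬(k-1 = 0 ∨ k-1 = n) by omega),
        if_neg (show ¬(k-1 = 1 ∨ k-1 = n-1) by omega),
        if_neg (show ¬(k-1 = 0 ∨ k-1 = n+1) by omega),
        if_neg (show ¬(k-1 = 1 ∨ k-1 = n) by omega),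
        if_neg (show ¬(k = 0 ∨ k = n) by omega),
        if_neg (show ¬(k = 1 ∨ k = n-1) by omega),
        if_neg (show ¬(k+1 = 0 ∨ k+1 = n+1) by omega),
        if_neg (show ¬(k+1 = 1 ∨ k+1 = n) by omega),
        if_neg (show ¬(k = 0 ∨ k = n+1) by omega),
        if_neg (show ¬(k = 1 ∨ k = n) by omega), hwint]
      ring
    · rw [dif_pos (by omega), dif_pos (show k < n+1 by omega),
        if_neg (show ¬(k-1 = 0 ∨ k-1 = n) by omega),
        if_neg (show ¬(k-1 = 1 ∨ k-1 = n-1) by omega),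
        if_neg (show ¬(k-1 = 0 ∨ k-1 = n+1) by omega),
        if_neg (show ¬(k-1 = 1 ∨ k-1 = n) by omega),
        if_neg (show ¬(k = 0 ∨ k = n) by omega),
        if_pos (show (k = 1 ∨ k = n-1) by omega),
        if_neg (show ¬(k+1 = 0 ∨ k+1 = n+1) by omega),
        if_pos (show (k+1 = 1 ∨ k+1 = n) by omega),
        if_neg (show ¬(k = 0 ∨ k = n+1) by omega),
        if_neg (show ¬(k = 1 ∨ k = n) by omega), hwnear, hwint]
      linear_combination (Real.sqrt R / 10) * hs10
    · rw [dif_pos (by omega), dif_pos (show k < n+1 by omega),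
        if_neg (show ¬(k-1 = 0 ∨ k-1 = n) by omega),
        if_pos (show (k-1 = 1 ∨ k-1 = n-1) by omega),
        if_neg (show ¬(k-1 = 0 ∨ k-1 = n+1) by omega),
        if_neg (show ¬(k-1 = 1 ∨ k-1 = n) by omega),
        if_pos (show (k = 0 ∨ k = n) by omega),
        if_pos (show (k+1 = 0 ∨ k+1 = n+1) by omega),
        if_neg (show ¬(k = 0 ∨ k = n+1) by omega),
        if_pos (show (k = 1 ∨ k = n) by omega), hwend, hwnear]
      ring
    · rw [dif_pos (by omega), dif_neg (show ¬(k < n+1) by omega), add_zero,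
        if_pos (show (k-1 = 0 ∨ k-1 = n) by omega),
        if_neg (show ¬(k-1 = 0 ∨ k-1 = n+1) by omega),
        if_pos (show (k-1 = 1 ∨ k-1 = n) by omega),
        if_pos (show (k = 0 ∨ k = n+1) by omega), hwend]
      ring

lemma lgood_feasible (n : ℕ) (hn : 3 ≤ n) : 
    (∀ i, 0 < lgood n i) ∧ (∑ i, lgood n i) / ((n : ℝ) + 1) ≤ 1 := by
  have hnR : (3:ℝ) ≤ (n:ℝ) := by exact_mod_cast hn
  set R := (40*(n:ℝ) - 3)/(40*((n:ℝ)+1)) with hR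
  have hRpos : 0 < R := by
    apply div_pos <;> linarith
  constructor
  · intro i
    simp only [lgood]
    split_ifs <;> positivity
  · have hsum : ∑ i, lgood n i = (n:ℝ) + 1 := by
      have hdecomp : ∀ i : Fin (n+1), lgood n i = 1/R + (lgood n i - 1/R) := by
        intro i; ring
      rw [Finset.sum_congr rfl (fun i _ => hdecomp i), Finset.sum_add_distrib]
      have h1 : ∑ _i : Fin (n+1), 1/R = ((n:ℝ)+1) * (1/R) := by
        rw [Finset.sum_const, Finset.card_univ, Fintype.card_fin, nsmul_eq_mul]
        push_cast
        ring
      set s : Finset (Fin (n+1)) :=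
        {⟨0, by omega⟩, ⟨1, by omega⟩, ⟨n-1, by omega⟩, ⟨n, by omega⟩} with hs
      have h2 : ∑ i, (lgood n i - 1/R) = ∑ i ∈ s, (lgood n i - 1/R) := by
        refine (Finset.sum_subset (Finset.subset_univ s) ?_).symm
        intro x _ hx
        rw [hs] at hx
        simp only [Finset.mem_insert, Finset.mem_singleton] at hx
        push_neg at hx
        obtain ⟨hx0, hx1, hx2, hx3⟩ := hx
        simp only [ne_eq, Fin.ext_iff, Fin.val_mk] at hx0 hx1 hx2 hx3
        have : lgood n x = 1/R := by
          simp only [lgood]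
          rw [if_neg (by omega), if_neg (by omega)]
        rw [this]
        ring
      have h3 : ∑ i ∈ s, (lgood n i - 1/R) = -(7/16)/R + -(1/10)/R + -(1/10)/R + -(7/16)/R := by
        rw [hs]
        rw [Finset.sum_insert (by
            simp only [Finset.mem_insert, Finset.mem_singleton, Fin.mk_eq_mk]
            omega),
          Finset.sum_insert (by
            simp only [Finset.mem_insert, Finset.mem_singleton, Fin.mk_eq_mk]
            omega),
          Finset.sum_insert (by
            simp only [Finset.mem_singleton, Fin.mk_eq_mk]
            omega),
          Finset.sum_singleton]
        have e0 : lgood n ⟨0, by omega⟩ = (9/16)/R := by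
          simp only [lgood, Fin.val_mk]
          rw [if_pos (Or.inl trivial : True ∨ 0 = n)]
        have e1 : lgood n ⟨1, by omega⟩ = (9/10)/R := by
          simp only [lgood, Fin.val_mk]
          rw [if_neg (show ¬(1 = 0 ∨ 1 = n) by omega), if_pos (Or.inl trivial : True ∨ 1 = n-1)]
        have e2 : lgood n ⟨n-1, by omega⟩ = (9/10)/R := by
          simp only [lgood, Fin.val_mk]
          rw [if_neg (show ¬(n-1 = 0 ∨ n-1 = n) by omega),
            if_pos (Or.inr trivial : n-1 = 1 ∨ True)]
        have e3 : lgood n ⟨n, by omega⟩ = (9/16)/R := by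
          simp only [lgood, Fin.val_mk]
          rw [if_pos (Or.inr trivial : n = 0 ∨ True)]
        rw [e0, e1, e2, e3]
        ring
      rw [h1, h2, h3]
      have hne1 : 40*(n:ℝ) - 3 ≠ 0 := by linarith
      have hne2 : 40*((n:ℝ)+1) ≠ 0 := by linarith
      have hcomb : ((n:ℝ)+1) * (1/R) + (-(7/16)/R + -(1/10)/R + -(1/10)/R + -(7/16)/R)
          = ((40*(n:ℝ) - 3)/40) * (1/R) := by ring
      rw [hcomb, hR, one_div, inv_div]
      field_simp
    rw [hsum, div_self (by positivity)]

noncomputable def Mconst : ℝ := 1079800/419121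

noncomputable def l2 : Fin 3 → ℝ := fun i => if (i:ℕ) = 1 then 6450/5399 else 9747/10798

lemma sigma_l2 : sigmaB 2 l2 = Real.sqrt Mconst := by
  have hM : (0:ℝ) < Mconst := by norm_num [Mconst]
  have hsM : Real.sqrt Mconst * Real.sqrt Mconst = Mconst := Real.mul_self_sqrt hM.le
  have hs43 : Real.sqrt 43 * Real.sqrt 43 = 43 := Real.mul_self_sqrt (by norm_num)
  have hsMpos : 0 < Real.sqrt Mconst := Real.sqrt_pos.mpr hM
  have hs43pos : 0 < Real.sqrt 43 := Real.sqrt_pos.mpr (by norm_num)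
  have hwend : ((9747:ℝ)/10798) ^ (-(1/2) : ℝ) = Real.sqrt Mconst * Real.sqrt 43 / 10 := by
    refine rpow_neg_half_eq (by norm_num) (by positivity) ?_
    rw [div_pow, mul_pow, Real.sq_sqrt hM.le, Real.sq_sqrt (by norm_num : (0:ℝ) ≤ 43), Mconst]
    norm_num
  have hwmid : ((6450:ℝ)/5399) ^ (-(1/2) : ℝ) = Real.sqrt Mconst * (57/100) := by
    refine rpow_neg_half_eq (by norm_num) (by positivity) ?_
    rw [mul_pow, Real.sq_sqrt hM.le, Mconst]
    norm_num
  refine sigmaB_eq_of_eig 2 _ ?_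
    (fun j => if (j:ℕ) = 0 ∨ (j:ℕ) = 3 then Real.sqrt 43 / 10 else 1) ?_ _ (by positivity) ?_
  · intro i
    simp only [l2]
    split_ifs <;> norm_num
  · intro j
    split_ifs <;> positivity
  · funext i
    rw [Bmat_mulVec_apply]
    have hI := i.isLt
    simp only [l2, Pi.smul_apply, smul_eq_mul, Fin.val_mk]
    set k := (i:ℕ) with hk
    rcases (show k = 0 ∨ k = 1 ∨ k = 2 ∨ k = 3 by omega) with h | h | h | h
    · rw [dif_neg (by omega), dif_pos (show k < 3 by omega), zero_add,
        if_neg (show ¬(k = 1) by omega),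
        if_neg (show ¬(k+1 = 0 ∨ k+1 = 3) by omega),
        if_pos (show (k = 0 ∨ k = 3) by omega), hwend]
      ring
    · rw [dif_pos (by omega), dif_pos (show k < 3 by omega),
        if_neg (show ¬(k-1 = 1) by omega),
        if_pos (show (k-1 = 0 ∨ k-1 = 3) by omega),
        if_pos (show (k = 1) by omega),
        if_neg (show ¬(k+1 = 0 ∨ k+1 = 3) by omega),
        if_neg (show ¬(k = 0 ∨ k = 3) by omega), hwend, hwmid]
      linear_combination (Real.sqrt Mconst / 100) * hs43
    · rw [dif_pos (by omega), dif_pos (show k < 3 by omega),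
        if_pos (show (k-1 = 1) by omega),
        if_neg (show ¬(k-1 = 0 ∨ k-1 = 3) by omega),
        if_neg (show ¬(k = 1) by omega),
        if_pos (show (k+1 = 0 ∨ k+1 = 3) by omega),
        if_neg (show ¬(k = 0 ∨ k = 3) by omega), hwend, hwmid]
      linear_combination (Real.sqrt Mconst / 100) * hs43
    · rw [dif_pos (by omega), dif_neg (show ¬(k < 3) by omega), add_zero,
        if_neg (show ¬(k-1 = 1) by omega),
        if_neg (show ¬(k-1 = 0 ∨ k-1 = 3) by omega),
        if_pos (show (k = 0 ∨ k = 3) by omega), hwend]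
      ring

/-- for `n > 1` neither the all-ones vector nor
`λ̃ = ((n+1)/n)·(1/2,1,…,1,1/2)` is a minimizer. -/
theorem stmt_2 (n : ℕ) (hn : 1 < n) :
    (∃ l : Fin (n+1) → ℝ, Feasible n l ∧
      sigmaB n l < sigmaB n (fun _ => 1)) ∧
    (∃ l' : Fin (n+1) → ℝ, Feasible n l' ∧
      sigmaB n l' < sigmaB n (fun i => if (i : ℕ) = 0 ∨ (i : ℕ) = n
        then ((n : ℝ) + 1) / (2 * n) else ((n : ℝ) + 1) / n)) := by
  have hones := sigma_ones n
  have htilde := sigma_tilde n hn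
  rcases (show n = 2 ∨ 3 ≤ n by omega) with h2 | h3
  · subst h2
    have hfeas : Feasible 2 l2 := by
      constructor
      · intro i
        simp only [l2]
        split_ifs <;> norm_num
      · rw [Fin.sum_univ_three]
        simp only [l2]
        norm_num
    have hσ : sigmaB 2 l2 = Real.sqrt Mconst := sigma_l2
    have hM : (0:ℝ) < Mconst := by norm_num [Mconst]
    constructor
    · refine ⟨l2, hfeas, ?_⟩
      rw [hσ, hones]
      have h5 : ((2:ℕ):ℝ) + 3 = 5 := by norm_num
      rw [h5, Real.cos_pi_div_five]
      have hs5 : (2.22:ℝ) < Real.sqrt 5 := by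
        nlinarith [Real.sq_sqrt (by norm_num : (0:ℝ) ≤ 5), Real.sqrt_nonneg 5]
      have hM' : Real.sqrt Mconst < 1.61 := by
        rw [show (1.61:ℝ) = Real.sqrt (1.61^2) by
          rw [Real.sqrt_sq (by norm_num : (0:ℝ) ≤ 1.61)]]
        apply Real.sqrt_lt_sqrt hM.le
        norm_num [Mconst]
      linarith
    · refine ⟨l2, hfeas, ?_⟩
      rw [hσ, htilde]
      have hlt : Mconst < ((2:ℕ):ℝ)/(((2:ℕ):ℝ)+1) * 4 := by
        push_cast
        norm_num [Mconst]
      have h1 : Real.sqrt Mconst < Real.sqrt (((2:ℕ):ℝ)/(((2:ℕ):ℝ)+1) * 4) :=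
        Real.sqrt_lt_sqrt hM.le hlt
      have h2 : Real.sqrt (((2:ℕ):ℝ)/(((2:ℕ):ℝ)+1) * 4)
          = 2 * Real.sqrt (((2:ℕ):ℝ)/(((2:ℕ):ℝ)+1)) := by
        rw [Real.sqrt_mul (by positivity), show Real.sqrt 4 = 2 by
          rw [show (4:ℝ) = 2^2 by norm_num, Real.sqrt_sq (by norm_num : (0:ℝ) ≤ 2)]]
        ring
      rw [← h2]
      exact h1
  · have hnR : (3:ℝ) ≤ (n:ℝ) := by exact_mod_cast h3
    have hfeas : Feasible n (lgood n) := lgood_feasible n h3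
    have hσ := sigma_lgood n h3
    set R := (40*(n:ℝ) - 3)/(40*((n:ℝ)+1)) with hR
    have hRpos : 0 < R := div_pos (by linarith) (by linarith)
    have hθpos : 0 < π/((n:ℝ)+3) := div_pos Real.pi_pos (by linarith)
    have hθhalf : π/((n:ℝ)+3) < π/2 :=
      div_lt_div_of_pos_left Real.pi_pos (by norm_num) (by linarith)
    have hcospos : 0 < Real.cos (π/((n:ℝ)+3)) :=
      Real.cos_pos_of_mem_Ioo ⟨by linarith, hθhalf⟩
    constructor
    · refine ⟨lgood n, hfeas, ?_⟩
      rw [hσ, hones]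
      have hcos2 : R < Real.cos (π/((n:ℝ)+3))^2 := by
        rcases (show n = 3 ∨ 4 ≤ n by omega) with h | h
        · have hn3 : (n:ℝ) = 3 := by exact_mod_cast h
          have h6 : (n:ℝ)+3 = 6 := by rw [hn3]; norm_num
          rw [h6, Real.cos_pi_div_six, div_pow, Real.sq_sqrt (by norm_num : (0:ℝ) ≤ 3),
            hR, hn3]
          norm_num
        · have hn4 : (4:ℝ) ≤ (n:ℝ) := by exact_mod_cast h
          have hsinpos : 0 < Real.sin (π/((n:ℝ)+3)) :=
            Real.sin_pos_of_pos_of_lt_pi hθpos (by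
              have : π/((n:ℝ)+3) < π/2 := hθhalf
              linarith [Real.pi_pos])
          have hsinlt : Real.sin (π/((n:ℝ)+3)) < π/((n:ℝ)+3) := Real.sin_lt hθpos
          have hpyth := Real.sin_sq_add_cos_sq (π/((n:ℝ)+3))
          have hθsq : (π/((n:ℝ)+3))^2 ≤ 43/(40*((n:ℝ)+1)) := by
            rw [div_pow, div_le_div_iff₀ (by positivity) (by positivity)]
            have hpi := Real.pi_lt_d2
            have hpi0 := Real.pi_pos
            have hpisq : π^2 < 9.9225 := by nlinarith
            nlinarith [hpisq, sq_nonneg ((n:ℝ) - 4), hn4]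
          have hR1 : R = 1 - 43/(40*((n:ℝ)+1)) := by
            rw [hR]
            field_simp
            ring
          nlinarith [hsinpos, hsinlt]
      have hlt : Real.sqrt R < Real.cos (π/((n:ℝ)+3)) := by
        have h' := Real.sqrt_lt_sqrt hRpos.le hcos2
        rwa [Real.sqrt_sq hcospos.le] at h'
      linarith
    · refine ⟨lgood n, hfeas, ?_⟩
      rw [hσ, htilde]
      have h1 : R < (n:ℝ)/((n:ℝ)+1) := by
        rw [hR, div_lt_div_iff₀ (by linarith) (by linarith)]
        nlinarith
      have h2 := Real.sqrt_lt_sqrt hRpos.le h1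
      linarith
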